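/- Let (X,d) be a metric space, G ⊆ X, and Π : X → G a map such that: (i) d(x,y) ≤ 1 implies d(Π x, Π y) ≤ a, and (ii) if d(x, Π x) ≥ a and d(x,y) ≤ b·d(x, Π x) then d(Π x, Π y) ≤ a, where a ≥ 1 and b > 0 are fixed constants. Then for every p > a and every 1-Lipschitz path θ : [0,s] → X whose image is disjoint from the p-neighborhood of G, the diameter of Π(θ([0,s])) is at most a·s/(b·p) + a. -/

import Mathlib

/-- Coarse contraction estimate for projections: a 1-Lipschitz path staying at
distance more than p from G has projection image of diameter at most a·s/(b·p)+a. -/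
theorem coarse_contraction_diam {X : Type*} [MetricSpace X]
    (G : Set X) (proj : X → X) (hprojG : ∀ x, proj x ∈ G)
    (a b : ℝ) (ha : 1 ≤ a) (hb : 0 < b)
    (h1 : ∀ x y : X, dist x y ≤ 1 → dist (proj x) (proj y) ≤ a)
    (h2 : ∀ x y : X, a ≤ dist x (proj x) → dist x y ≤ b * dist x (proj x) →
      dist (proj x) (proj y) ≤ a)
    (p : ℝ) (hp : a < p)
    (s : ℝ) (hs : 0 ≤ s) (θ : ℝ → X)
    (hθ : LipschitzOnWith 1 θ (Set.Icc 0 s))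
    (hfar : ∀ u ∈ Set.Icc (0:ℝ) s, p < Metric.infDist (θ u) G) :
    Metric.diam (proj '' (θ '' Set.Icc 0 s)) ≤ a * s / (b * p) + a := by
  have ha0 : (0:ℝ) < a := lt_of_lt_of_le one_pos ha
  have hp0 : (0:ℝ) < p := ha0.trans hp
  have ht : (0:ℝ) < b * p := mul_pos hb hp0
  -- single step: projections of points at parameter distance ≤ b*p are a-close
  have step : ∀ u ∈ Set.Icc (0:ℝ) s, ∀ v ∈ Set.Icc (0:ℝ) s, dist u v ≤ b * p →
      dist (proj (θ u)) (proj (θ v)) ≤ a := by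
    intro u hu v hv huv
    have hd : p < dist (θ u) (proj (θ u)) :=
      lt_of_lt_of_le (hfar u hu) (Metric.infDist_le_dist_of_mem (hprojG _))
    have hθd : dist (θ u) (θ v) ≤ dist u v := by
      have := hθ.dist_le_mul u hu v hv
      simpa using this
    exact h2 (θ u) (θ v) (hp.le.trans hd.le)
      (hθd.trans (huv.trans (mul_le_mul_of_nonneg_left hd.le hb.le)))
  -- chaining
  have chain : ∀ n : ℕ, ∀ u ∈ Set.Icc (0:ℝ) s, ∀ v ∈ Set.Icc (0:ℝ) s, u ≤ v →
      v - u ≤ n * (b * p) → dist (proj (θ u)) (proj (θ v)) ≤ n * a := by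
    intro n
    induction n with
    | zero =>
      intro u hu v hv huv hle
      simp only [Nat.cast_zero, zero_mul] at hle
      have : u = v := le_antisymm huv (by linarith)
      simp [this]
    | succ n ih =>
      intro u hu v hv huv hle
      set w := max u (v - b * p) with hw
      have hwu : u ≤ w := le_max_left _ _
      have hwv : w ≤ v := max_le huv (by linarith)
      have hwI : w ∈ Set.Icc (0:ℝ) s := ⟨le_trans hu.1 hwu, le_trans hwv hv.2⟩
      have h₁ : dist (proj (θ u)) (proj (θ w)) ≤ n * a := by
        apply ih u hu w hwI hwu
        rcases le_total u (v - b * p) with h | h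
        · have : w = v - b * p := by simp [hw, h]
          rw [this]; push_cast at hle ⊢; linarith
        · have : w = u := by simp [hw, h]
          rw [this]; simp [mul_nonneg (Nat.cast_nonneg n) ht.le]
      have h₂ : dist (proj (θ w)) (proj (θ v)) ≤ a := by
        apply step w hwI v hv
        rw [Real.dist_eq, abs_of_nonpos (by linarith)]
        have : v - b * p ≤ w := le_max_right _ _
        linarith
      calc dist (proj (θ u)) (proj (θ v)) ≤ _ + _ := dist_triangle _ (proj (θ w)) _
        _ ≤ n * a + a := add_le_add h₁ h₂
        _ = (n + 1 : ℕ) * a := by push_cast; ring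
  -- bound for any pair
  have pair : ∀ u ∈ Set.Icc (0:ℝ) s, ∀ v ∈ Set.Icc (0:ℝ) s, u ≤ v →
      dist (proj (θ u)) (proj (θ v)) ≤ a * s / (b * p) + a := by
    intro u hu v hv huv
    set n := ⌈(v - u) / (b * p)⌉₊ with hn
    have hle : v - u ≤ n * (b * p) := by
      rw [← div_le_iff₀ ht] at *
      exact Nat.le_ceil _
    have hub : (n : ℝ) ≤ (v - u) / (b * p) + 1 :=
      (Nat.ceil_lt_add_one (div_nonneg (by linarith) ht.le)).le
    have := chain n u hu v hv huv hle
    have hvu : v - u ≤ s := by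
      have := hu.1; have := hv.2; linarith
    calc dist (proj (θ u)) (proj (θ v)) ≤ n * a := this
      _ ≤ ((v - u) / (b * p) + 1) * a := mul_le_mul_of_nonneg_right hub ha0.le
      _ = a * (v - u) / (b * p) + a := by field_simp
      _ ≤ a * s / (b * p) + a := by
          gcongr
  apply Metric.diam_le_of_forall_dist_le
  · positivity
  · rintro x ⟨_, ⟨u, hu, rfl⟩, rfl⟩ y ⟨_, ⟨v, hv, rfl⟩, rfl⟩
    rcases le_total u v with h | h
    · exact pair u hu v hv h
    · rw [dist_comm]; exact pair v hv u hu h
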